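/- arXiv:1506.07853 — 9 statements merged into one kernel-verified Lean document; each statement's English description precedes it below -/
import Mathlib

section
/- Let C₁ and C₀ be finitely generated free ℤ-modules and ∂ : C₁ → C₀ a ℤ-linear map such that the quotient C₀ ⧸ range(∂) is torsion-free (as holds for the boundary operator ∂₁ of a connected finite simplicial complex). Let G be an abelian group (in the paper G = 𝔽* is the multiplicative group of a field). Then the restriction map ω ↦ ω|ker ∂ induces a group isomorphism Hom(C₁, G) ⧸ im(d) ≅ Hom(ker ∂, G), where d : Hom(C₀, G) → Hom(C₁, G) is precomposition with ∂. Equivalently: (i) every group homomorphism ker ∂ → G extends to a homomorphism C₁ → G, and (ii) a homomorphism ω : C₁ → G vanishes on ker ∂ if and only if ω = f ∘ ∂ for some homomorphism f : C₀ → G. -/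
/-- If `M ⧸ K` is projective, the submodule `K` admits a linear retraction. -/
lemma exists_retraction_of_projective_quotient
    {R M : Type*} [Ring R] [AddCommGroup M] [Module R M] (K : Submodule R M)
    [Module.Projective R (M ⧸ K)] :
    ∃ π : M →ₗ[R] K, ∀ x : K, π (x : M) = x := by
  obtain ⟨s, hs⟩ := Module.projective_lifting_property K.mkQ LinearMap.id
    (Submodule.mkQ_surjective K)
  have hmem : ∀ x : M, x - s (K.mkQ x) ∈ K := by
    intro x
    rw [← Submodule.Quotient.mk_eq_zero, Submodule.Quotient.mk_sub]
    have h1 : K.mkQ (s (K.mkQ x)) = K.mkQ x := congrFun (congrArg DFunLike.coe hs) (K.mkQ x)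
    simp only [Submodule.mkQ_apply] at h1 ⊢
    rw [h1, sub_self]
  refine ⟨LinearMap.codRestrict K (LinearMap.id - s.comp K.mkQ) (fun x => hmem x), ?_⟩
  intro x
  ext
  have hx0 : (Submodule.Quotient.mk (x : M) : M ⧸ K) = 0 :=
    (Submodule.Quotient.mk_eq_zero K).2 x.2
  simp [LinearMap.codRestrict, Submodule.mkQ_apply, hx0]

/-- A submodule of a f.g. free module over a PID is free. -/
lemma submodule_free_pid {R M : Type*} [CommRing R] [IsDomain R] [IsPrincipalIdealRing R]
    [AddCommGroup M] [Module R M]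
    [Module.Free R M] [Module.Finite R M] (N : Submodule R M) : Module.Free R N := by
  obtain ⟨n, b⟩ := N.basisOfPid (Module.Free.chooseBasis R M)
  exact Module.Free.of_basis b

/-- The kernel of a linear map between modules over a PID with f.g. free codomain
admits an additive retraction. -/
lemma ker_retraction {R M N : Type*} [CommRing R] [IsDomain R] [IsPrincipalIdealRing R]
    [AddCommGroup M] [AddCommGroup N]
    [Module R M] [Module R N] [Module.Free R N] [Module.Finite R N]
    (f : M →ₗ[R] N) :
    ∃ π : M →+ (LinearMap.ker f), ∀ x : LinearMap.ker f, π (x : M) = x := by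
  haveI hfr := submodule_free_pid (LinearMap.range f)
  haveI hq := Module.Free.of_equiv (f.quotKerEquivRange).symm
  obtain ⟨π, hπ⟩ := exists_retraction_of_projective_quotient (LinearMap.ker f)
  exact ⟨π.toAddMonoidHom, hπ⟩

/-- A submodule of a f.g. free module over a PID whose quotient is torsion-free
(stated elementwise) admits an additive retraction. -/
lemma tf_retraction {R M : Type*} [CommRing R] [IsDomain R] [IsPrincipalIdealRing R]
    [AddCommGroup M] [Module R M]
    [Module.Free R M] [Module.Finite R M] (K : Submodule R M)
    (htf : ∀ (r : R) (x : M), r • x ∈ K → r = 0 ∨ x ∈ K) :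
    ∃ π : M →+ K, ∀ x : K, π (x : M) = x := by
  haveI h' : NoZeroSMulDivisors R (M ⧸ K) := by
    refine ⟨@fun r q h0 => ?_⟩
    obtain ⟨x, rfl⟩ := Submodule.Quotient.mk_surjective K q
    rw [← Submodule.Quotient.mk_smul, Submodule.Quotient.mk_eq_zero] at h0
    rcases htf r x h0 with h | h
    · exact Or.inl h
    · exact Or.inr ((Submodule.Quotient.mk_eq_zero K).2 h)
  haveI hfin : Module.Finite R (M ⧸ K) := Module.Finite.quotient R K
  haveI hfree : Module.Free R (M ⧸ K) := Module.free_of_finite_type_torsion_free'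
  obtain ⟨π, hπ⟩ := exists_retraction_of_projective_quotient K
  exact ⟨π.toAddMonoidHom, hπ⟩

/-- A linear map over a PID with free f.g. codomain admits an additive section onto
its range. -/
lemma range_section {R M N : Type*} [CommRing R] [IsDomain R] [IsPrincipalIdealRing R]
    [AddCommGroup M] [AddCommGroup N]
    [Module R M] [Module R N] [Module.Free R N] [Module.Finite R N]
    (f : M →ₗ[R] N) :
    ∃ s : (LinearMap.range f) →+ M, ∀ y : LinearMap.range f, f (s y) = y := by
  haveI hfr := submodule_free_pid (LinearMap.range f)
  obtain ⟨s, hs⟩ := Module.projective_lifting_property f.rangeRestrict LinearMap.id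
    f.surjective_rangeRestrict
  refine ⟨s.toAddMonoidHom, fun y => ?_⟩
  have h2 : f.rangeRestrict (s y) = y := congrFun (congrArg DFunLike.coe hs) y
  exact congrArg Subtype.val h2

/-- For `bd : C₁ → C₀` ℤ-linear between f.g. free ℤ-modules with torsion-free
cokernel, the restriction map induces an isomorphism
`Hom(C₁,G)/im d ≅ Hom(ker bd, G)`; equivalently (i) every homomorphism `ker bd → G` extends
to `C₁`, and (ii) a homomorphism `ω : C₁ → G` vanishes on `ker bd` iff `ω = f ∘ bd`. -/
theorem discrete_line_bundle_classification
    (C₁ C₀ : Type*) [AddCommGroup C₁] [AddCommGroup C₀]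
    [Module ℤ C₁] [Module ℤ C₀]
    [Module.Free ℤ C₁] [Module.Free ℤ C₀]
    [Module.Finite ℤ C₁] [Module.Finite ℤ C₀]
    (bd : C₁ →ₗ[ℤ] C₀)
    (htf : NoZeroSMulDivisors ℤ (C₀ ⧸ LinearMap.range bd))
    (G : Type*) [AddCommGroup G] :
    (∀ μ : (LinearMap.ker bd) →+ G, ∃ ω : C₁ →+ G,
      ∀ c : LinearMap.ker bd, ω (c : C₁) = μ c) ∧
    (∀ ω : C₁ →+ G,
      (∀ c ∈ LinearMap.ker bd, ω c = 0) ↔ ∃ f : C₀ →+ G, ∀ x, ω x = f (bd x)) := by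
  constructor
  · intro μ
    obtain ⟨π, hπ⟩ := ker_retraction bd
    refine ⟨μ.comp π, fun c => ?_⟩
    simp [hπ c]
  · intro ω
    constructor
    · intro h0
      have helt : ∀ (n : ℤ) (x : C₀), n • x ∈ LinearMap.range bd →
          n = 0 ∨ x ∈ LinearMap.range bd := by
        intro n x hmem
        have h1 : (Submodule.Quotient.mk (n • x) : C₀ ⧸ LinearMap.range bd) = 0 :=
          (Submodule.Quotient.mk_eq_zero _).2 hmem
        have e := map_zsmul
          (AddMonoidHom.mk' (M := C₀) (Submodule.Quotient.mk (p := LinearMap.range bd))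
            (fun a b => rfl)) n x
        change (Submodule.Quotient.mk (n • x) : C₀ ⧸ LinearMap.range bd) =
          n • (Submodule.Quotient.mk x : C₀ ⧸ LinearMap.range bd) at e
        rw [e] at h1
        rcases eq_zero_or_eq_zero_of_smul_eq_zero h1 with h | h
        · exact Or.inl h
        · exact Or.inr ((Submodule.Quotient.mk_eq_zero _).1 h)
      obtain ⟨π₀, hπ₀⟩ := tf_retraction (R := ℤ) (LinearMap.range bd) (fun n x hx => by
        have e2 := Int.cast_smul_eq_zsmul ℤ n x
        rw [Int.cast_id] at e2
        rw [e2] at hx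
        exact helt n x hx)
      obtain ⟨s, hs⟩ := range_section bd
      refine ⟨ω.comp (s.comp π₀), fun x => ?_⟩
      have hmem : bd x ∈ LinearMap.range bd := ⟨x, rfl⟩
      have h1 : π₀ (bd x) = ⟨bd x, hmem⟩ := hπ₀ ⟨bd x, hmem⟩
      have h2 : bd (s ⟨bd x, hmem⟩) = bd x := hs ⟨bd x, hmem⟩
      have hker : x - s ⟨bd x, hmem⟩ ∈ LinearMap.ker bd := by
        simp [LinearMap.mem_ker, map_sub, h2]
      have := h0 _ hker
      rw [map_sub, sub_eq_zero] at this
      simp only [AddMonoidHom.comp_apply, h1]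
      exact this
    · rintro ⟨f, hf⟩ c hc
      rw [hf c, hc, map_zero]
end

section
/- Let C₂ and C₁ be finitely generated free ℤ-modules and ∂ : C₂ → C₁ a ℤ-linear map. Suppose Ω : C₂ → ℝ is an additive group homomorphism (a closed real-valued discrete 2-form) which is integral, i.e. Ω(c) ∈ 2π·ℤ for every c ∈ ker ∂. Then there exists a group homomorphism ω : C₁ → Circle such that ω(∂ s) = Circle.exp(Ω(s)) for all s ∈ C₂. (Discrete analogue of Weil's theorem: every integral 2-form is realized as the curvature of a discrete hermitian line bundle, the homomorphism ω being its connection form.) -/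
/-- discrete Weil theorem: if `Ω : C₂ → ℝ` is an integral discrete 2-form
(its values on closed 2-chains lie in `2π·ℤ`), then there is a `Circle`-valued
connection form `ω : C₁ → Circle` with `ω (∂ s) = exp(i Ω(s))` for all `s`. -/
theorem discrete_weil_theorem
    (C₂ C₁ : Type*) [AddCommGroup C₂] [AddCommGroup C₁]
    [Module ℤ C₂] [Module ℤ C₁]
    [Module.Free ℤ C₂] [Module.Free ℤ C₁]
    [Module.Finite ℤ C₂] [Module.Finite ℤ C₁]
    (bd : C₂ →ₗ[ℤ] C₁)
    (Ω : C₂ →+ ℝ)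
    (hint : ∀ c ∈ LinearMap.ker bd, ∃ m : ℤ, Ω c = 2 * Real.pi * m) :
    ∃ ω : AddChar C₁ Circle, ∀ s : C₂, ω (bd s) = Circle.exp (Ω s) := by
  rename_i m₂ m₁ _ _ _ _
  obtain rfl : m₂ = AddCommGroup.toIntModule C₂ := AddCommGroup.uniqueIntModule.uniq m₂
  obtain rfl : m₁ = AddCommGroup.toIntModule C₁ := AddCommGroup.uniqueIntModule.uniq m₁
  set T : ℝ := 2 * Real.pi with hT
  have hT0 : T ≠ 0 := by positivity
  haveI : Fact (0 < T) := ⟨by positivity⟩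
  -- the map C₂ → ℝ/(2π)ℤ induced by Ω
  let f : C₂ →ₗ[ℤ] AddCircle T :=
    ((QuotientAddGroup.mk' (AddSubgroup.zmultiples T)).comp Ω).toIntLinearMap
  have hker : LinearMap.ker bd ≤ LinearMap.ker f := by
    intro c hc
    obtain ⟨m, hm⟩ := hint c hc
    have : (Ω c : AddCircle T) = 0 := by
      rw [hm]
      have : (2 : ℝ) * Real.pi * m = m • T := by
        simp [hT, zsmul_eq_mul]; ring
      rw [this]
      exact (AddCircle.coe_eq_zero_iff _).2 ⟨m, rfl⟩
    show f c = 0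
    exact this
  -- descend to the range of bd
  let g₀ : LinearMap.range bd →ₗ[ℤ] AddCircle T :=
    (Submodule.liftQ (LinearMap.ker bd) f hker).comp
      (bd.quotKerEquivRange.symm.toLinearMap)
  have hg₀ : ∀ s : C₂, g₀ ⟨bd s, LinearMap.mem_range_self bd s⟩ = f s := by
    intro s
    have h1 : bd.quotKerEquivRange.symm ⟨bd s, LinearMap.mem_range_self bd s⟩ =
        Submodule.Quotient.mk s := by
      rw [LinearEquiv.symm_apply_eq]
      rfl
    simp only [g₀, LinearMap.comp_apply, LinearEquiv.coe_coe, h1]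
    exact Submodule.liftQ_apply _ _ _
  -- extend along the inclusion, using divisibility of the additive circle
  obtain ⟨g, hg⟩ := (Module.Baer.of_divisible (AddCircle T)).extension_property_addMonoidHom
    (LinearMap.range bd).subtype.toAddMonoidHom Subtype.coe_injective g₀.toAddMonoidHom
  refine ⟨AddCircle.toCircle_addChar.compAddMonoidHom g, fun s => ?_⟩
  have hgbd : g (bd s) = (Ω s : AddCircle T) := by
    have := DFunLike.congr_fun hg ⟨bd s, LinearMap.mem_range_self bd s⟩
    simpa [hg₀ s, f] using this
  show AddCircle.toCircle (g (bd s)) = Circle.exp (Ω s)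
  rw [hgbd, AddCircle.toCircle_apply_mk, hT]
  congr 1
  field_simp
end

section
/- Let V be a type, ω : V → V → Circle with ω j i = (ω i j)⁻¹ for all i, j, and Ω : V → V → V → ℝ with (ω k i) · (ω j k) · (ω i j) = Circle.exp(Ω i j k) for all i, j, k. Let ψ : V → ℂ be admissible, i.e. ψ i ≠ 0 for all i and ψ j ≠ −(ω i j)·(ψ i) for all i, j, and set ξ i j := Complex.arg(ψ j / ((ω i j)·(ψ i))). Then the index form of ψ is integer-valued: for all vertices i, j, k, the real number (ξ i j + ξ j k + ξ k i + Ω i j k) / (2π) is an integer. -/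
/-- for a discrete hermitian line bundle with curvature `Ω` (in a vertex
trivialization, connection `ω` with `ω k i * ω j k * ω i j = exp(i Ω i j k)`) and an
admissible section `ψ` with rotation form `ξ i j = arg(ψ j / (ω i j · ψ i))`, the index
form `(ξ i j + ξ j k + ξ k i + Ω i j k)/(2π)` is integer-valued. -/
theorem index_form_is_integer_valued
    (V : Type*)
    (ω : V → V → Circle) (hω : ∀ i j, ω j i = (ω i j)⁻¹)
    (Ω : V → V → V → ℝ)
    (hcurv : ∀ i j k, ω k i * ω j k * ω i j = Circle.exp (Ω i j k))
    (ψ : V → ℂ)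
    (hψ : ∀ i, ψ i ≠ 0)
    (hadm : ∀ i j, ψ j ≠ -(((ω i j : ℂ)) * ψ i))
    (ξ : V → V → ℝ)
    (hξ : ∀ i j, ξ i j = Complex.arg (ψ j / (((ω i j : ℂ)) * ψ i))) :
    ∀ i j k, ∃ m : ℤ,
      (ξ i j + ξ j k + ξ k i + Ω i j k) / (2 * Real.pi) = m := by
  intro i j k
  set a : ℂ := ψ j / (((ω i j : ℂ)) * ψ i) with ha
  set b : ℂ := ψ k / (((ω j k : ℂ)) * ψ j) with hb
  set c : ℂ := ψ i / (((ω k i : ℂ)) * ψ k) with hc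
  have hωne : ∀ p q : V, ((ω p q : ℂ)) ≠ 0 := fun p q => Circle.coe_ne_zero _
  have hane : a ≠ 0 := div_ne_zero (hψ j) (mul_ne_zero (hωne i j) (hψ i))
  have hbne : b ≠ 0 := div_ne_zero (hψ k) (mul_ne_zero (hωne j k) (hψ j))
  have hcne : c ≠ 0 := div_ne_zero (hψ i) (mul_ne_zero (hωne k i) (hψ k))
  have habs : ∀ p q : V, ‖ψ q / (((ω p q : ℂ)) * ψ p)‖
      = ‖ψ q‖ / ‖ψ p‖ := by
    intro p q
    simp [map_div₀, map_mul, Circle.norm_coe]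
  have hexp : ∀ z : ℂ, z ≠ 0 → Complex.exp (z.arg * Complex.I) = z / ‖z‖ := by
    intro z hz
    rw [eq_div_iff (by simpa using norm_ne_zero_iff.mpr hz), mul_comm]
    exact Complex.norm_mul_exp_arg_mul_I z
  have h1 : ((ω k i : ℂ)) * (ω j k : ℂ) * (ω i j : ℂ)
      = Complex.exp ((Ω i j k : ℂ) * Complex.I) := by
    have := congrArg (Subtype.val) (hcurv i j k)
    simpa [Circle.coe_exp] using this
  have hprod : a * b * c * Complex.exp ((Ω i j k : ℂ) * Complex.I) = 1 := by
    rw [← h1, ha, hb, hc, div_mul_div_comm, div_mul_div_comm, div_mul_eq_mul_div,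
      div_eq_one_iff_eq (by
        exact mul_ne_zero (mul_ne_zero (mul_ne_zero (hωne i j) (hψ i))
          (mul_ne_zero (hωne j k) (hψ j))) (mul_ne_zero (hωne k i) (hψ k)))]
    ring
  have hA : ‖a‖ * ‖b‖ * ‖c‖ = 1 := by
    have e1 := norm_ne_zero_iff.mpr (hψ i)
    have e2 := norm_ne_zero_iff.mpr (hψ j)
    have e3 := norm_ne_zero_iff.mpr (hψ k)
    rw [ha, hb, hc, habs, habs, habs]
    field_simp
  have key : Complex.exp (((ξ i j + ξ j k + ξ k i + Ω i j k : ℝ) : ℂ) * Complex.I) = 1 := by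
    push_cast
    rw [add_mul, add_mul, add_mul, Complex.exp_add, Complex.exp_add, Complex.exp_add]
    rw [hξ i j, hξ j k, hξ k i]
    rw [hexp _ hane, hexp _ hbne, hexp _ hcne]
    rw [div_mul_div_comm, div_mul_div_comm, div_mul_eq_mul_div, hprod]
    rw [← Complex.ofReal_mul, ← Complex.ofReal_mul, hA]
    simp
  obtain ⟨n, hn⟩ := Complex.exp_eq_one_iff.mp key
  refine ⟨n, ?_⟩
  have hC : ((ξ i j + ξ j k + ξ k i + Ω i j k : ℝ) : ℂ) = (n : ℂ) * (2 * Real.pi) := by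
    apply mul_right_cancel₀ Complex.I_ne_zero
    rw [hn]; ring
  have hreal : (ξ i j + ξ j k + ξ k i + Ω i j k : ℝ) = (n : ℝ) * (2 * Real.pi) := by
    exact_mod_cast hC
  rw [hreal, mul_div_cancel_right₀ _ (ne_of_gt (by positivity))]
end

section
/- Let C and C' be finitely generated free ℤ-modules, ∂ : C → C' a ℤ-linear map, and f : A → B a surjective homomorphism of abelian groups. Suppose the fundamental sequence of forms with coefficients in A is exact, meaning: every group homomorphism ker ∂ → A extends to a homomorphism C → A, and every homomorphism ω : C → A vanishing on ker ∂ is of the form ω = η ∘ ∂ for some homomorphism η : C' → A. Then the fundamental sequence of forms with coefficients in B is exact: every group homomorphism ker ∂ → B extends to C → B, and every homomorphism Ω : C → B vanishing on ker ∂ is of the form Ω = η ∘ ∂ for some homomorphism η : C' → B. -/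
/-- Lifting an additive hom along a surjection, from a projective ℤ-module source. -/
lemma lift_addHom {M A B : Type*} [AddCommGroup M]
    [AddCommGroup A] [AddCommGroup B]
    (iM : Module ℤ M) (pM : @Module.Projective ℤ _ M _ iM)
    (f : A →+ B) (hf : Function.Surjective f)
    (g : M →+ B) : ∃ h : M →+ A, ∀ x, f (h x) = g x := by
  have e : iM = AddCommGroup.toIntModule M := by
    letI u := AddCommGroup.uniqueIntModule (M := M)
    exact (u.uniq iM).trans (u.uniq _).symm
  subst e
  haveI := pM
  obtain ⟨h, hh⟩ := Module.projective_lifting_property f.toIntLinearMap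
    g.toIntLinearMap hf
  exact ⟨h.toAddMonoidHom, fun x => congrFun (congrArg DFunLike.coe hh) x⟩

/-- Exactness of the fundamental sequence of forms propagates along a
surjective homomorphism `f : A → B` of abelian coefficient groups. -/
theorem fundamental_sequence_exactness_propagates
    (C C' : Type*) [AddCommGroup C] [AddCommGroup C']
    [Module ℤ C] [Module ℤ C']
    [Module.Free ℤ C] [Module.Free ℤ C']
    [Module.Finite ℤ C] [Module.Finite ℤ C']
    (bd : C →ₗ[ℤ] C')
    (A B : Type*) [AddCommGroup A] [AddCommGroup B]
    (f : A →+ B) (hf : Function.Surjective f)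
    (hsurjA : ∀ μ : (LinearMap.ker bd) →+ A, ∃ ω : C →+ A,
      ∀ c : LinearMap.ker bd, ω (c : C) = μ c)
    (hexactA : ∀ ω : C →+ A, (∀ c ∈ LinearMap.ker bd, ω c = 0) →
      ∃ η : C' →+ A, ∀ x, ω x = η (bd x)) :
    (∀ μ : (LinearMap.ker bd) →+ B, ∃ ω : C →+ B,
      ∀ c : LinearMap.ker bd, ω (c : C) = μ c) ∧
    (∀ Ω : C →+ B, (∀ c ∈ LinearMap.ker bd, Ω c = 0) →
      ∃ η : C' →+ B, ∀ x, Ω x = η (bd x)) := by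
  haveI : IsNoetherian ℤ C := isNoetherian_of_isNoetherianRing_of_finite ℤ C
  haveI : IsNoetherian ℤ C' := isNoetherian_of_isNoetherianRing_of_finite ℤ C'
  letI : Module ℤ (LinearMap.ker bd) := (LinearMap.ker bd).module
  letI : Module ℤ (LinearMap.range bd) := (LinearMap.range bd).module
  haveI : Module.Finite ℤ (LinearMap.ker bd) :=
    Module.Finite.iff_fg.mpr (IsNoetherian.noetherian (LinearMap.ker bd))
  haveI : Module.Finite ℤ (LinearMap.range bd) :=
    Module.Finite.iff_fg.mpr (IsNoetherian.noetherian (LinearMap.range bd))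
  haveI : Module.Free ℤ (LinearMap.ker bd) := Module.free_of_finite_type_torsion_free'
  haveI : Module.Free ℤ (LinearMap.range bd) := Module.free_of_finite_type_torsion_free'
  constructor
  · intro μ
    obtain ⟨μA, hμA⟩ := lift_addHom inferInstance
      (Module.Projective.of_free) f hf μ
    obtain ⟨ωA, hωA⟩ := hsurjA μA
    exact ⟨f.comp ωA, fun c => by simp [hωA, hμA]⟩
  · intro Ω hΩ
    -- lift Ω along f
    obtain ⟨ω, hω⟩ := lift_addHom ‹Module ℤ C› Module.Projective.of_free f hf Ω
    -- split the surjection `bd.rangeRestrict : C → range bd`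
    obtain ⟨s, hs⟩ := Module.projective_lifting_property (R := ℤ)
      bd.rangeRestrict LinearMap.id bd.surjective_rangeRestrict
    set p : C → C := fun x => x - s (bd.rangeRestrict x) with hp
    have hbds : ∀ y : LinearMap.range bd, bd (s y) = (y : C') := by
      intro y
      have h1 := congrFun (congrArg DFunLike.coe hs) y
      have h2 := congrArg (Subtype.val) h1
      simpa using h2
    have hpker : ∀ x, p x ∈ LinearMap.ker bd := by
      intro x
      simp only [LinearMap.mem_ker, hp, map_sub, hbds]
      simp
    have hpfix : ∀ c ∈ LinearMap.ker bd, p c = c := by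
      intro c hc
      have h0 : bd.rangeRestrict c = 0 := by
        apply Subtype.ext
        simpa using hc
      simp [hp, h0]
    set ω'' : C →+ A :=
      { toFun := fun x => ω x - ω (p x)
        map_zero' := by simp [hp]
        map_add' := fun x y => by
          have hpadd : p (x + y) = p x + p y := by
            simp only [hp, map_add]; abel
          simp only [hpadd, map_add]; abel } with hω''
    have hvanish : ∀ c ∈ LinearMap.ker bd, ω'' c = 0 := by
      intro c hc
      simp [hω'', hpfix c hc]
    obtain ⟨ηA, hηA⟩ := hexactA ω'' hvanish
    refine ⟨f.comp ηA, fun x => ?_⟩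
    have h1 : ω'' x = ηA (bd x) := hηA x
    have h2 : f (ω'' x) = f (ω x) - f (ω (p x)) := by
      simp [hω'', map_sub]
    have h3 : f (ω (p x)) = Ω (p x) := hω _
    have h4 : Ω (p x) = 0 := hΩ _ (hpker x)
    have h5 : f (ω'' x) = Ω x := by rw [h2, h3, h4, hω]; exact sub_zero _
    simpa [h1] using h5.symm
end

section
/- Let C and C' be finitely generated free ℤ-modules and ∂ : C → C' a ℤ-linear map. Then the fundamental sequence of forms with coefficients in the circle group is exact; in particular, a group homomorphism Ω : C → Circle satisfies Ω(c) = 1 for all c ∈ ker ∂ if and only if there exists a group homomorphism η : C' → Circle with Ω = η ∘ ∂. -/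
noncomputable instance : DivisibleBy (Additive Circle) ℤ :=
  Function.Surjective.divisibleBy Circle.expHom
    (fun z => ⟨Complex.arg (Additive.toMul z : Circle),
      congrArg Additive.ofMul (Circle.exp_arg (Additive.toMul z))⟩)
    (fun a n => map_zsmul Circle.expHom n a)

/-- exactness of the fundamental sequence of forms with coefficients in the
circle group: the restriction map to `Hom(ker ∂, Circle)` is surjective, and a
`Circle`-valued form is trivial on `ker ∂` iff it is exact. -/
theorem fundamental_sequence_exact_circle
    (C C' : Type*) [AddCommGroup C] [AddCommGroup C']
    [Module ℤ C] [Module ℤ C']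
    [Module.Free ℤ C] [Module.Free ℤ C']
    [Module.Finite ℤ C] [Module.Finite ℤ C']
    (bd : C →ₗ[ℤ] C') :
    (∀ μ : AddChar (LinearMap.ker bd) Circle, ∃ ω : AddChar C Circle,
      ∀ c : LinearMap.ker bd, ω (c : C) = μ c) ∧
    (∀ Ω : AddChar C Circle,
      (∀ c ∈ LinearMap.ker bd, Ω c = 1) ↔ ∃ η : AddChar C' Circle, ∀ x, Ω x = η (bd x)) := by
  -- normalize the `ℤ`-module structures to the canonical ones
  rename_i aC aC' mC mC' frC frC' fiC fiC'
  letI : Subsingleton (Module ℤ C) := @Unique.instSubsingleton _ AddCommGroup.uniqueIntModule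
  letI : Subsingleton (Module ℤ C') := @Unique.instSubsingleton _ AddCommGroup.uniqueIntModule
  obtain rfl : mC = AddCommGroup.toIntModule C := Subsingleton.elim _ _
  obtain rfl : mC' = AddCommGroup.toIntModule C' := Subsingleton.elim _ _
  haveI : Module.Injective ℤ (Additive Circle) :=
    (Module.Baer.of_divisible (Additive Circle)).injective
  set K := LinearMap.ker bd with hK
  constructor
  · -- surjectivity of restriction: extend from the submodule `K` by injectivity of `Circle`
    intro μ
    obtain ⟨h, hh⟩ := Module.Injective.extension_property ℤ (Additive Circle)
      _ _ K.subtype (Submodule.injective_subtype K)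
      (AddChar.toAddMonoidHomEquiv μ).toIntLinearMap
    refine ⟨AddChar.toAddMonoidHomEquiv.symm h.toAddMonoidHom, fun c => ?_⟩
    have h1 : h (c : C) = Additive.ofMul (μ c) := LinearMap.congr_fun hh c
    simp [AddChar.toAddMonoidHomEquiv_symm_apply, h1]
  · intro Ω
    constructor
    · -- Ω vanishes on ker bd → Ω factors through bd
      intro h0
      let f := (AddChar.toAddMonoidHomEquiv Ω).toIntLinearMap
      have hle : K ≤ LinearMap.ker f := by
        intro c hc
        have h1 : Ω c = 1 := h0 c hc
        rw [LinearMap.mem_ker]; exact congrArg Additive.ofMul h1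
      let g := (K.liftQ f hle) ∘ₗ (LinearMap.quotKerEquivRange bd).symm.toLinearMap
      obtain ⟨h, hh⟩ := Module.Injective.extension_property ℤ (Additive Circle)
        _ _ (LinearMap.range bd).subtype (Submodule.injective_subtype _) g
      refine ⟨AddChar.toAddMonoidHomEquiv.symm h.toAddMonoidHom, fun x => ?_⟩
      have h1 : h (bd x) = g ⟨bd x, LinearMap.mem_range_self bd x⟩ :=
        LinearMap.congr_fun hh ⟨bd x, LinearMap.mem_range_self bd x⟩
      have h2 : (LinearMap.quotKerEquivRange bd).symm ⟨bd x, LinearMap.mem_range_self bd x⟩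
          = K.mkQ x := by
        apply (LinearMap.quotKerEquivRange bd).injective
        simp [LinearMap.quotKerEquivRange_apply_mk]
      have h3 : g ⟨bd x, LinearMap.mem_range_self bd x⟩ = f x := by
        simp only [g, LinearMap.coe_comp, Function.comp_apply, LinearEquiv.coe_coe, h2]
        simp [Submodule.liftQ_apply]
      have h4 : h (bd x) = Additive.ofMul (Ω x) := by rw [h1, h3]; rfl
      simp [AddChar.toAddMonoidHomEquiv_symm_apply, h4]
    · rintro ⟨η, hη⟩ c hc
      have hc0 : bd c = 0 := hc
      rw [hη, hc0, AddChar.map_zero_eq_one]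
end

section
/- Let C and C' be finitely generated free ℤ-modules and ∂ : C → C' a ℤ-linear map. Then the fundamental sequence of forms with coefficients in the multiplicative group ℂˣ of nonzero complex numbers is exact; in particular, a group homomorphism Ω : C → ℂˣ satisfies Ω(c) = 1 for all c ∈ ker ∂ if and only if there exists a group homomorphism η : C' → ℂˣ with Ω = η ∘ ∂. -/
/-- `ℂˣ` is a divisible (rootable) group: every unit has an `n`-th root. -/
noncomputable instance : RootableBy ℂˣ ℤ :=
  @Group.rootableByIntOfRootableByNat ℂˣ _ <|
    rootableByOfPowLeftSurj _ _ <| by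
      intro n hn u
      refine ⟨Units.mk0 (Complex.exp (Complex.log (u : ℂ) / n)) (Complex.exp_ne_zero _), ?_⟩
      ext
      rw [Units.val_pow_eq_pow_val, Units.val_mk0, ← Complex.exp_nat_mul,
        mul_div_cancel₀ _ (by exact_mod_cast hn : (n : ℂ) ≠ 0)]
      exact Complex.exp_log u.ne_zero

noncomputable instance : DivisibleBy (Additive ℂˣ) ℤ where
  div a n := Additive.ofMul (RootableBy.root (Additive.toMul a) n)
  div_zero a := congrArg Additive.ofMul (RootableBy.root_zero _)
  div_cancel {n} a hn := by
    have h := RootableBy.root_cancel (α := ℤ) (Additive.toMul a) hn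
    apply Additive.toMul.injective
    simpa [toMul_zsmul] using h

/-- exactness of the fundamental sequence of forms with coefficients in the
multiplicative group `ℂˣ`: the restriction map to `Hom(ker ∂, ℂˣ)` is surjective, and a
`ℂˣ`-valued form is trivial on `ker ∂` iff it is exact. -/
theorem fundamental_sequence_exact_units_complex
    (C C' : Type*) [AddCommGroup C] [AddCommGroup C']
    [Module ℤ C] [Module ℤ C']
    [Module.Free ℤ C] [Module.Free ℤ C']
    [Module.Finite ℤ C] [Module.Finite ℤ C']
    (bd : C →ₗ[ℤ] C') :
    (∀ μ : AddChar (LinearMap.ker bd) ℂˣ, ∃ ω : AddChar C ℂˣ,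
      ∀ c : LinearMap.ker bd, ω (c : C) = μ c) ∧
    (∀ Ω : AddChar C ℂˣ,
      (∀ c ∈ LinearMap.ker bd, Ω c = 1) ↔ ∃ η : AddChar C' ℂˣ, ∀ x, Ω x = η (bd x)) := by
  classical
  -- The range of `bd` is a f.g. torsion-free module over `ℤ`, hence free, hence projective,
  -- so the surjection `bd.rangeRestrict : C →ₗ range bd` splits.
  letI : Module ℤ ↥(LinearMap.range bd) := (LinearMap.range bd).module
  haveI : Module.IsTorsionFree ℤ C' := Module.Free.instIsTorsionFree ℤ C'
  haveI : Module.Finite ℤ ↥(LinearMap.range bd) := Module.Finite.range bd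
  haveI hfree : Module.Free ℤ ↥(LinearMap.range bd) :=
    Module.free_of_finite_type_torsion_free'
  obtain ⟨s, hs⟩ := Module.projective_lifting_property (R := ℤ) bd.rangeRestrict
    LinearMap.id bd.surjective_rangeRestrict
  have hs' : ∀ y : LinearMap.range bd, bd.rangeRestrict (s y) = y := fun y =>
    congrFun (congrArg DFunLike.coe hs) y
  have hbds : ∀ y : LinearMap.range bd, bd (s y) = (y : C') := by
    intro y
    have := hs' y
    simpa [LinearMap.rangeRestrict, Subtype.ext_iff] using congrArg (Subtype.val) this
  -- the projection of `C` onto `ker bd`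
  have hker : ∀ x : C, x - s (bd.rangeRestrict x) ∈ LinearMap.ker bd := by
    intro x
    simp [LinearMap.mem_ker, map_sub, hbds]
  letI : Module ℤ ↥(LinearMap.ker bd) := (LinearMap.ker bd).module
  let π : C →ₗ[ℤ] (LinearMap.ker bd) :=
    LinearMap.codRestrict _ (LinearMap.id - s ∘ₗ bd.rangeRestrict) hker
  have hπ : ∀ c : LinearMap.ker bd, π (c : C) = c := by
    intro c
    have hc : bd.rangeRestrict (c : C) = 0 := by
      ext; simpa [LinearMap.rangeRestrict] using c.2
    apply Subtype.ext
    show (c : C) - s (bd.rangeRestrict (c : C)) = (c : C)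
    rw [hc, map_zero, sub_zero]
  have baer : Module.Baer ℤ (Additive ℂˣ) := Module.Baer.of_divisible _
  constructor
  · -- surjectivity of restriction: compose with the projection `π`
    intro μ
    refine ⟨⟨fun x => μ (π x), by simp,
      fun a b => by simp only [map_add, AddChar.map_add_eq_mul]⟩, ?_⟩
    intro c
    simp [hπ c]
  · intro Ω
    constructor
    · intro hΩ
      -- `Ω` factors through the range of `bd` via the splitting `s`
      set Ω' : C →+ Additive ℂˣ := AddChar.toAddMonoidHomEquiv Ω with hΩ'
      set χ : (LinearMap.range bd) →+ Additive ℂˣ :=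
        Ω'.comp s.toAddMonoidHom with hχ
      obtain ⟨η', hη'⟩ := baer.extension_property_addMonoidHom
        (LinearMap.range bd).subtype.toAddMonoidHom
        (Submodule.injective_subtype _) χ
      refine ⟨AddChar.toAddMonoidHomEquiv.symm η', ?_⟩
      intro x
      have h1 : Ω x = Ω (s (bd.rangeRestrict x)) := by
        have hsplit : Ω x = Ω (x - s (bd.rangeRestrict x)) * Ω (s (bd.rangeRestrict x)) := by
          rw [← AddChar.map_add_eq_mul]; congr 1; abel
        rw [hsplit, hΩ _ (hker x), one_mul]
      have h2 : η' (bd x) = χ (bd.rangeRestrict x) := by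
        have := congrFun (congrArg DFunLike.coe hη') (bd.rangeRestrict x)
        simpa using this
      have h3 : (AddChar.toAddMonoidHomEquiv.symm η') (bd x) = Additive.toMul (η' (bd x)) := by
        simp
      rw [h3, h2, h1]
      rfl
    · rintro ⟨η, hη⟩ c hc
      rw [hη c, (LinearMap.mem_ker).mp hc, AddChar.map_zero_eq_one]
end

section
/- Let C₂, C₁, C₀ be finitely generated free ℤ-modules with ℤ-linear maps ∂₂ : C₂ → C₁ and ∂₁ : C₁ → C₀ satisfying ∂₁ ∘ ∂₂ = 0, and let G be the circle group Circle (respectively, G = ℂˣ). Let d₀ : Hom(C₀,G) → Hom(C₁,G) and d₁ : Hom(C₁,G) → Hom(C₂,G) be precomposition with ∂₁ and ∂₂ respectively. Then the sequence 1 → ker d₁ ⧸ im d₀ → Hom(C₁,G) ⧸ im d₀ → Hom(C₂,G) → Hom(ker ∂₂, G) → 1 is exact, where the first map is the natural inclusion, the second is induced by d₁, and the third is restriction to ker ∂₂. Equivalently: (i) restriction Hom(C₂,G) → Hom(ker ∂₂,G) is surjective; (ii) a homomorphism Ω : C₂ → G restricts trivially to ker ∂₂ if and only if Ω = η ∘ ∂₂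 for some η ∈ Hom(C₁,G); (iii) for η ∈ Hom(C₁,G), η ∘ ∂₂ is trivial if and only if the class of η in Hom(C₁,G) ⧸ im d₀ lies in the image of ker d₁ ⧸ im d₀. -/
/-- Exactness of the sequence
`1 → ker d₁ ⧸ im d₀ → Hom(C₁,G) ⧸ im d₀ → Hom(C₂,G) → Hom(ker ∂₂, G) → 1`,
stated equivalently as: (i) restriction `Hom(C₂,G) → Hom(ker ∂₂,G)` is surjective;
(ii) `Ω : C₂ → G` is trivial on `ker ∂₂` iff `Ω = η ∘ ∂₂`; (iii) `η ∘ ∂₂` is trivial iff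
`η` differs from a form closed under `d₁` by a form in the image of `d₀`. -/
def FundSeqOfFormsExact {C₂ C₁ C₀ : Type*}
    [AddCommGroup C₂] [AddCommGroup C₁] [AddCommGroup C₀]
    [Module ℤ C₂] [Module ℤ C₁] [Module ℤ C₀]
    (bd2 : C₂ →ₗ[ℤ] C₁) (bd1 : C₁ →ₗ[ℤ] C₀)
    (G : Type*) [CommGroup G] : Prop :=
  (∀ μ : AddChar (LinearMap.ker bd2) G, ∃ Ω : AddChar C₂ G,
    ∀ c : LinearMap.ker bd2, Ω (c : C₂) = μ c) ∧
  (∀ Ω : AddChar C₂ G,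
    (∀ c ∈ LinearMap.ker bd2, Ω c = 1) ↔ ∃ η : AddChar C₁ G, ∀ x, Ω x = η (bd2 x)) ∧
  (∀ η : AddChar C₁ G,
    (∀ s, η (bd2 s) = 1) ↔
      ∃ θ : AddChar C₁ G, (∀ s, θ (bd2 s) = 1) ∧
        ∃ g : AddChar C₀ G, ∀ x, η x = θ x * g (bd1 x))


section Aux

/-- Rootable groups give divisible `Additive` groups. -/
noncomputable def additiveDivisibleOfRootable (G : Type*) [Group G] [RootableBy G ℤ] :
    DivisibleBy (Additive G) ℤ where
  div a n := Additive.ofMul (RootableBy.root a.toMul n)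
  div_zero a := congrArg Additive.ofMul (RootableBy.root_zero _)
  div_cancel {n} a hn := by
    rw [← ofMul_zpow, RootableBy.root_cancel _ hn]
    rfl

noncomputable instance : RootableBy ℂˣ ℕ :=
  rootableByOfPowLeftSurj _ _ fun {n} hn x => by
    obtain ⟨z, hz⟩ := IsAlgClosed.exists_pow_nat_eq (x : ℂ) (Nat.pos_of_ne_zero hn)
    have hz0 : z ≠ 0 := by
      rintro rfl
      rw [zero_pow hn] at hz
      exact x.ne_zero hz.symm
    exact ⟨Units.mk0 z hz0, Units.ext (by simpa using hz)⟩

noncomputable instance inst_s10 : RootableBy ℂˣ ℤ := Group.rootableByIntOfRootableByNat _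

noncomputable instance inst_s10_2 : DivisibleBy (Additive ℂˣ) ℤ := additiveDivisibleOfRootable _

noncomputable instance : RootableBy Circle ℕ :=
  rootableByOfPowLeftSurj _ _ fun {n} hn x => by
    obtain ⟨z, hz⟩ := IsAlgClosed.exists_pow_nat_eq (x : ℂ) (Nat.pos_of_ne_zero hn)
    have habs : ‖z‖ = 1 := by
      have h1 : ‖z‖ ^ n = 1 := by rw [← norm_pow, hz, Circle.norm_coe]
      have h0 : (0:ℝ) ≤ ‖z‖ := norm_nonneg _
      rcases lt_trichotomy ‖z‖ 1 with h | h | h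
      · exact absurd h1 (by nlinarith [pow_lt_one₀ h0 h hn])
      · exact h
      · exact absurd h1 (by nlinarith [one_lt_pow₀ h hn])
    refine ⟨⟨z, ?_⟩, ?_⟩
    · show z ∈ Metric.sphere (0:ℂ) 1
      simpa [mem_sphere_zero_iff_norm] using habs
    ext
    push_cast
    exact hz

noncomputable instance : RootableBy Circle ℤ := Group.rootableByIntOfRootableByNat _

noncomputable instance inst_s10_3 : DivisibleBy (Additive Circle) ℤ := additiveDivisibleOfRootable _

end Aux

section Main

variable {M G : Type*} [AddCommGroup M] [CommGroup G] [DivisibleBy (Additive G) ℤ]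

/-- Extension of `G`-valued characters along an injective map, for divisible `G`. -/
theorem AddChar.extend_inj {S : Type*} [AddCommGroup S] (i : S →+ M)
    (hi : Function.Injective i) (μ : AddChar S G) :
    ∃ Ω : AddChar M G, ∀ s : S, Ω (i s) = μ s := by
  obtain ⟨h, hh⟩ := (Module.Baer.of_divisible (Additive G)).extension_property_addMonoidHom
    i hi (AddChar.toAddMonoidHomEquiv μ)
  refine ⟨AddChar.toAddMonoidHomEquiv.symm h, fun s => ?_⟩
  have h1 := DFunLike.congr_fun hh s
  simp only [AddMonoidHom.coe_comp, Function.comp_apply,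
    AddChar.toAddMonoidHomEquiv_apply] at h1
  have h2 : Additive.toMul (h (i s)) = μ s := congrArg Additive.toMul h1
  simpa using h2

theorem fundSeq_of_divisible' {C₂ C₁ C₀ : Type*}
    [AddCommGroup C₂] [AddCommGroup C₁] [AddCommGroup C₀]
    [Module ℤ C₂] [Module ℤ C₁] [Module ℤ C₀]
    (bd2 : C₂ →ₗ[ℤ] C₁) (bd1 : C₁ →ₗ[ℤ] C₀) (hcomplex : bd1 ∘ₗ bd2 = 0)
    (G : Type*) [CommGroup G] [DivisibleBy (Additive G) ℤ] :
    FundSeqOfFormsExact bd2 bd1 G := by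
  refine ⟨?_, ?_, ?_⟩
  · intro μ
    exact AddChar.extend_inj (AddMonoidHom.mk' (Subtype.val : LinearMap.ker bd2 → C₂)
      (fun _ _ => rfl)) Subtype.val_injective μ
  · intro Ω
    constructor
    · intro hΩ
      set F : C₂ →+ Additive G := AddChar.toAddMonoidHomEquiv Ω with hF
      set b : C₂ →+ C₁ := bd2.toAddMonoidHom with hb
      have hK : b.ker ≤ F.ker := by
        intro c hc
        have hc' : bd2 c = 0 := hc
        have : Ω c = 1 := hΩ c hc'
        show Additive.ofMul (Ω c) = 0
        rw [this]; rfl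
      set μhom : b.range →+ Additive G :=
        (QuotientAddGroup.lift b.ker F hK).comp
          (QuotientAddGroup.quotientKerEquivRange b).symm.toAddMonoidHom with hμ
      have key : ∀ x : C₂, μhom ⟨b x, ⟨x, rfl⟩⟩ = F x := by
        intro x
        have h1 : (QuotientAddGroup.quotientKerEquivRange b)
            (QuotientAddGroup.mk x) = ⟨b x, ⟨x, rfl⟩⟩ := rfl
        have h2 : (QuotientAddGroup.quotientKerEquivRange b).symm ⟨b x, ⟨x, rfl⟩⟩
            = QuotientAddGroup.mk x := by
          rw [← h1, AddEquiv.symm_apply_apply]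
        rw [hμ]
        simp only [AddMonoidHom.coe_comp, Function.comp_apply, AddEquiv.coe_toAddMonoidHom, h2]
        rfl
      obtain ⟨η, hη⟩ := AddChar.extend_inj
        (AddMonoidHom.mk' (Subtype.val : b.range → C₁) (fun _ _ => rfl))
        Subtype.val_injective (AddChar.toAddMonoidHomEquiv.symm μhom)
      refine ⟨η, fun x => ?_⟩
      have h1 := hη ⟨b x, ⟨x, rfl⟩⟩
      rw [AddChar.toAddMonoidHomEquiv_symm_apply, key x] at h1
      have h2 : Additive.toMul (F x) = Ω x := rfl
      rw [h2] at h1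
      exact h1.symm
    · rintro ⟨η, hη⟩ c hc
      rw [hη, LinearMap.mem_ker.mp hc, AddChar.map_zero_eq_one]
  · intro η
    constructor
    · intro h
      exact ⟨η, h, 1, fun x => by simp⟩
    · rintro ⟨θ, hθ, g, hg⟩ s
      have h0 : bd1 (bd2 s) = 0 := by
        have := LinearMap.congr_fun hcomplex s
        simpa using this
      rw [hg, hθ, h0, AddChar.map_zero_eq_one, one_mul]

end Main

/-- for `∂₂ : C₂ → C₁`, `∂₁ : C₁ → C₀` with `∂₁ ∘ ∂₂ = 0` between finitely
generated free ℤ-modules, the sequence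
`1 → H¹ → Hom(C₁,G) ⧸ im d₀ → Hom(C₂,G) → Hom(ker ∂₂, G) → 1` is exact for `G = Circle`
and for `G = ℂˣ`. -/
theorem fundamental_four_term_sequence_exact
    (C₂ C₁ C₀ : Type*) [AddCommGroup C₂] [AddCommGroup C₁] [AddCommGroup C₀]
    [Module ℤ C₂] [Module ℤ C₁] [Module ℤ C₀]
    [Module.Free ℤ C₂] [Module.Free ℤ C₁] [Module.Free ℤ C₀]
    [Module.Finite ℤ C₂] [Module.Finite ℤ C₁] [Module.Finite ℤ C₀]
    (bd2 : C₂ →ₗ[ℤ] C₁) (bd1 : C₁ →ₗ[ℤ] C₀)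
    (hcomplex : bd1 ∘ₗ bd2 = 0) :
    FundSeqOfFormsExact bd2 bd1 Circle ∧ FundSeqOfFormsExact bd2 bd1 ℂˣ :=
  ⟨fundSeq_of_divisible' bd2 bd1 hcomplex Circle, fundSeq_of_divisible' bd2 bd1 hcomplex ℂˣ⟩
end

section
/- Let n ≥ 1 and let v₀, v₁, …, v_n be an affinely independent family of points in ℝⁿ (equivalently, an affine basis of the n-dimensional real vector space). Then for every function f assigning a real number to each unordered pair {i, j} with i ≠ j (the 1-simplices, i.e. edges, of the simplex), there exists a unique symmetric bilinear form S on ℝⁿ such that S(v_j − v_i, v_j − v_i) = f({i, j}) for all i ≠ j. Equivalently, the linear map sending a symmetric bilinear form S to the edge function {i, j} ↦ S(v_j − v_i, v_j − v_i) is a linear isomorphism from the space of symmetric bilinear forms on ℝⁿ onto the space of real-valued functions on the n(n+1)/2 edges. -/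
/-- for an affinely independent family `v₀, …, v_n` in `ℝⁿ` (`n ≥ 1`) and
any symmetric assignment `f` of real numbers to the edges `{i,j}`, `i ≠ j`, there is a
unique symmetric bilinear form `S` on `ℝⁿ` with `S (v j - v i) (v j - v i) = f i j` for
all `i ≠ j` (a discrete metric determines a unique constant symmetric 2-tensor). -/
theorem discrete_metric_determines_symmetric_tensor
    (n : ℕ) (hn : 1 ≤ n)
    (v : Fin (n + 1) → (Fin n → ℝ))
    (hv : AffineIndependent ℝ v)
    (f : Fin (n + 1) → Fin (n + 1) → ℝ)
    (hf : ∀ i j, f i j = f j i) :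
    ∃! S : (Fin n → ℝ) →ₗ[ℝ] (Fin n → ℝ) →ₗ[ℝ] ℝ,
      (∀ x y, S x y = S y x) ∧
      ∀ i j, i ≠ j → S (v j - v i) (v j - v i) = f i j := by
  have : NeZero n := ⟨by omega⟩
  -- linear independence of the edge vectors from v 0
  have hli' := (affineIndependent_iff_linearIndependent_vsub ℝ v 0).mp hv
  let e : Fin n ≃ {x : Fin (n + 1) // x ≠ 0} :=
    { toFun := fun k => ⟨k.succ, Fin.succ_ne_zero k⟩
      invFun := fun x => (x : Fin (n + 1)).pred x.2
      left_inv := fun k => by simp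
      right_inv := fun x => by
        ext; simp }
  have hli : LinearIndependent ℝ (fun k : Fin n => v k.succ - v 0) := by
    have := hli'.comp e e.injective
    simpa [e, Function.comp_def, vsub_eq_sub] using this
  have hcard : Fintype.card (Fin n) = Module.finrank ℝ (Fin n → ℝ) := by
    simp [Module.finrank_fin_fun]
  let b : Module.Basis (Fin n) ℝ (Fin n → ℝ) :=
    basisOfLinearIndependentOfCardEqFinrank hli hcard
  have hb : ∀ k, b k = v k.succ - v 0 := fun k => by
    simp [b, coe_basisOfLinearIndependentOfCardEqFinrank]
  -- the matrix of the desired bilinear form in basis b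
  set M : Fin n → Fin n → ℝ := fun k l =>
    if k = l then f 0 k.succ else (f 0 k.succ + f 0 l.succ - f k.succ l.succ) / 2 with hM
  have hMsymm : ∀ k l, M k l = M l k := by
    intro k l
    by_cases h : k = l
    · simp [hM, h]
    · simp only [hM, if_neg h, if_neg (Ne.symm h)]
      rw [hf k.succ l.succ]; ring
  let S₀ : (Fin n → ℝ) →ₗ[ℝ] (Fin n → ℝ) →ₗ[ℝ] ℝ :=
    b.constr ℝ (fun k => b.constr ℝ (M k))
  have hS₀b : ∀ k l, S₀ (b k) (b l) = M k l := by
    intro k l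
    simp only [S₀, Module.Basis.constr_basis]
  have hS₀symm : ∀ x y, S₀ x y = S₀ y x := by
    have : S₀ = S₀.flip := by
      apply LinearMap.ext_basis b b
      intro k l
      simp [hS₀b, LinearMap.flip_apply, hMsymm k l]
    intro x y
    conv_lhs => rw [this]
    rfl
  -- key computation: any symmetric S satisfying the edge conditions has matrix M
  have key : ∀ S : (Fin n → ℝ) →ₗ[ℝ] (Fin n → ℝ) →ₗ[ℝ] ℝ,
      (∀ x y, S x y = S y x) →
      (∀ i j, i ≠ j → S (v j - v i) (v j - v i) = f i j) →
      ∀ k l, S (b k) (b l) = M k l := by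
    intro S hsymm hedge k l
    by_cases h : k = l
    · subst h
      have := hedge 0 k.succ (Fin.succ_ne_zero k).symm
      rw [← hb k] at this
      simp [hM, this]
    · have hdiag : ∀ m : Fin n, S (b m) (b m) = f 0 m.succ := by
        intro m
        have := hedge 0 m.succ (Fin.succ_ne_zero m).symm
        rwa [← hb m] at this
      have hne : k.succ ≠ l.succ := fun hc => h (Fin.succ_injective n hc)
      have hvec : v l.succ - v k.succ = b l - b k := by
        rw [hb k, hb l]; abel
      have hedge' := hedge k.succ l.succ hne
      rw [hvec] at hedge'
      simp only [map_sub, LinearMap.sub_apply] at hedge'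
      have h1 := hdiag k
      have h2 := hdiag l
      have h3 := hsymm (b k) (b l)
      simp only [hM, if_neg h]
      linarith
  refine ⟨S₀, ⟨hS₀symm, ?_⟩, ?_⟩
  · -- S₀ satisfies the edge conditions
    intro i j hij
    induction i using Fin.cases with
    | zero =>
      induction j using Fin.cases with
      | zero => exact absurd rfl hij
      | succ l =>
        rw [← hb l, hS₀b]
        simp [hM]
    | succ k =>
      induction j using Fin.cases with
      | zero =>
        have : v 0 - v k.succ = -(b k) := by rw [hb k]; abel
        rw [this, map_neg, map_neg, LinearMap.neg_apply, neg_neg, hS₀b]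
        simp [hM, hf 0 k.succ]
      | succ l =>
        have hne : k ≠ l := fun hc => hij (by rw [hc])
        have hvec : v l.succ - v k.succ = b l - b k := by
          rw [hb k, hb l]; abel
        rw [hvec]
        simp only [map_sub, LinearMap.sub_apply, hS₀b]
        simp only [hM, if_neg hne, if_neg (Ne.symm hne), if_pos rfl]
        rw [hf l.succ k.succ]
        ring
  · -- uniqueness
    rintro T ⟨hTsymm, hTedge⟩
    apply LinearMap.ext_basis b b
    intro k l
    rw [key T hTsymm hTedge k l, hS₀b]
end

section
/- Let E be a finite-dimensional real inner product space of dimension n ≥ 1 and let v₀, …, v_n be an affine basis of E (n + 1 affinely independent points spanning E). For each i, let x_i : E → ℝ be the i-th barycentric coordinate (the unique affine map with x_i(v_j) = δ_{ij}) and let g_i ∈ E be its gradient, i.e. the unique vector with x_i(p) − x_i(q) = ⟪g_i, p − q⟫ for all p, q ∈ E. Let p_i be the orthogonal projection of v_i onto the affine span of {v_j : j ≠ i} and h_i := dist(v_i, p_i) > 0 the distance from v_i to the opposite face. Then g_i = (v_i − p_i) / h_i²; equivalently, g_i = −N_i / h_i where N_i := (p_i − v_i)/h_i is the outward-pointing unit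 normal of the face opposite to v_i. -/
open scoped RealInnerProductSpace

/-- for an affine basis `v₀, …, v_n` of an `n`-dimensional real inner
product space (`n ≥ 1`), the gradient `g i` of the `i`-th barycentric coordinate is
`(v i - p i)/h i²`, where `p i` is the orthogonal projection of `v i` onto the affine
span of the opposite face and `h i = dist (v i) (p i)` is the corresponding height
(equivalently `g i = -N i / h i` for the outward unit normal `N i`). -/
theorem barycentric_gradient_eq
    (E : Type*) [NormedAddCommGroup E] [InnerProductSpace ℝ E] [FiniteDimensional ℝ E]
    (n : ℕ) (hn : 1 ≤ n) (hdim : Module.finrank ℝ E = n)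
    (B : AffineBasis (Fin (n + 1)) ℝ E)
    (g : Fin (n + 1) → E)
    (hg : ∀ i (p q : E), B.coord i p - B.coord i q = ⟪g i, p - q⟫)
    (p : Fin (n + 1) → E)
    (hp_mem : ∀ i, p i ∈ affineSpan ℝ (⇑B '' {j | j ≠ i}))
    (hp_orth : ∀ i, ∀ q ∈ affineSpan ℝ (⇑B '' {j | j ≠ i}),
      ⟪B i - p i, q - p i⟫ = 0) :
    ∀ i, g i = ((dist (B i) (p i)) ^ 2)⁻¹ • (B i - p i) := by
  intro i
  set w : E := ((dist (B i) (p i)) ^ 2)⁻¹ • (B i - p i) with hw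
  -- `B i ≠ p i`
  have hne : B i ≠ p i := by
    intro h
    have : B i ∈ affineSpan ℝ (⇑B '' {j | j ≠ i}) := h ▸ hp_mem i
    have := (B.ind.mem_affineSpan_iff i {j | j ≠ i}).mp this
    exact this rfl
  have hd0 : dist (B i) (p i) ≠ 0 := dist_ne_zero.mpr hne
  have h2ne : (dist (B i) (p i)) ^ 2 ≠ 0 := pow_ne_zero _ hd0
  have hself : ⟪B i - p i, B i - p i⟫ = (dist (B i) (p i)) ^ 2 := by
    rw [real_inner_self_eq_norm_sq, dist_eq_norm]
  -- the coordinate vanishes at `p i`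
  have hcoordp : B.coord i (p i) = 0 := by
    have hmem := hp_mem i
    rw [Set.image_eq_range] at hmem
    obtain ⟨s, wt, hwt, hcomb⟩ := eq_affineCombination_of_mem_affineSpan hmem
    have := Finset.map_affineCombination (k := ℝ) s (fun x : ↑{j | j ≠ i} => B ↑x) wt hwt (B.coord i)
    rw [hcomb, this, Finset.affineCombination_eq_linear_combination _ _ _ hwt]
    refine Finset.sum_eq_zero fun j _ => ?_
    have : (B.coord i) (B j.1) = 0 := by
      rw [B.coord_apply]; simp [Ne.symm j.2]
    simp [Function.comp, this]
  -- inner products of `B i - p i` with `B j - p i`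
  have hkey : ∀ j, ⟪B i - p i, B j - p i⟫ = if j = i then (dist (B i) (p i)) ^ 2 else 0 := by
    intro j
    by_cases hji : j = i
    · simp [hji, hself, dist_eq_norm]
    · have hjm : B j ∈ affineSpan ℝ (⇑B '' {j | j ≠ i}) :=
        mem_affineSpan ℝ (Set.mem_image_of_mem _ hji)
      simp [hji, hp_orth i (B j) hjm]
  -- both `g i` and `w` pair the same against `B j - B i`
  have hsame : ∀ j, ⟪g i - w, B j - B i⟫ = 0 := by
    intro j
    have h1 : ⟪g i, B j - B i⟫ = (if j = i then (1:ℝ) else 0) - 1 := by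
      rw [← hg i (B j) (B i), B.coord_apply, B.coord_apply]
      simp [eq_comm]
    have h2 : ⟪w, B j - B i⟫ = (if j = i then (1:ℝ) else 0) - 1 := by
      have : B j - B i = (B j - p i) - (B i - p i) := by abel
      rw [hw, this, inner_smul_left, inner_sub_right, real_inner_comm (B j - p i),
        real_inner_comm (B i - p i), hkey j, hkey i]
      simp only [if_pos rfl, RCLike.conj_to_real]
      by_cases hji : j = i <;> field_simp [hji] <;> simp [hji] <;> ring
    rw [inner_sub_left, h1, h2, sub_self]
  -- the vectors `B j - B i` span the whole space
  have hspan : Submodule.span ℝ (Set.range fun j => B j - B i) = ⊤ := by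
    have htot : affineSpan ℝ (Set.range ⇑B) = ⊤ := B.tot
    have hvs : vectorSpan ℝ (Set.range ⇑B) = ⊤ := by
      rw [← direction_affineSpan, htot, AffineSubspace.direction_top]
    rw [vectorSpan_eq_span_vsub_set_right ℝ (Set.mem_range_self i)] at hvs
    rw [← hvs]
    congr 1
    ext x
    simp only [vsub_eq_sub, Set.mem_image, Set.mem_range]
    constructor
    · rintro ⟨y, rfl⟩; exact ⟨B y, ⟨y, rfl⟩, rfl⟩
    · rintro ⟨_, ⟨y, rfl⟩, rfl⟩; exact ⟨y, rfl⟩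
  -- conclude
  have hzero : g i - w = 0 := by
    have hall : ∀ u : E, ⟪g i - w, u⟫ = 0 := by
      intro u
      have hu : u ∈ Submodule.span ℝ (Set.range fun j => B j - B i) := by
        rw [hspan]; trivial
      induction hu using Submodule.span_induction with
      | mem x hx => obtain ⟨j, rfl⟩ := hx; exact hsame j
      | zero => simp
      | add x y _ _ hx hy => rw [inner_add_right, hx, hy, add_zero]
      | smul c x _ hx => rw [inner_smul_right, hx, mul_zero]
    have := hall (g i - w)
    rwa [inner_self_eq_zero] at this
  exact sub_eq_zero.mp hzero
end
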